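/- Let λ₁ > 0, 0 < β < 1, T > 0, λ > 0, and t ∈ [T/2, T]. Then β e^{-√λ(T-t)} / (2β√λ + 2√λ e^{-√λ t}) ≤ (1/(2√λ₁)) · β^{(T-t)/t} · [√λ₁ T / (1 + ln(√λ₁ T / β))]^{(2t-T)/t}, provided λ ≥ λ₁ and √λ₁ T > β. -/

import Mathlib

private lemma pow_trick {s1 s P Q ν : ℝ} (hs1 : 0 < s1) (hss : s1 ≤ s) (hQ : 0 < Q)
    (hP : 0 < P) (hν0 : 0 ≤ ν) (hν1 : ν ≤ 1) (h : s1 * Q ≤ s * P) :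
    s1 * Q ^ ν ≤ s * P ^ ν := by
  rcases le_total Q P with hQP | hPQ
  · exact mul_le_mul hss (Real.rpow_le_rpow hQ.le hQP hν0) (Real.rpow_nonneg hQ.le ν)
      (by linarith)
  · have hr0 : 0 < P / Q := div_pos hP hQ
    have hr1 : P / Q ≤ 1 := (div_le_one hQ).2 hPQ
    have h2 : P / Q ≤ (P / Q) ^ ν := by
      nth_rw 1 [← Real.rpow_one (P / Q)]
      exact Real.rpow_le_rpow_of_exponent_ge hr0 hr1 hν1
    have h3 : (P / Q) ^ ν * Q ^ ν = P ^ ν := by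
      rw [← Real.mul_rpow (div_nonneg hP.le hQ.le) hQ.le, div_mul_cancel₀ _ hQ.ne']
    have hQν : 0 < Q ^ ν := Real.rpow_pos_of_pos hQ ν
    have h4 : s1 ≤ s * (P / Q) := by
      rw [mul_div_assoc', le_div_iff₀ hQ]; exact h
    calc s1 * Q ^ ν ≤ (s * (P / Q)) * Q ^ ν := mul_le_mul_of_nonneg_right h4 hQν.le
      _ ≤ (s * (P / Q) ^ ν) * Q ^ ν :=
          mul_le_mul_of_nonneg_right
            (mul_le_mul_of_nonneg_left h2 (by linarith)) hQν.le
      _ = s * P ^ ν := by rw [mul_assoc, h3]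

theorem error_kernel_second_half (β T lam lam1 t : ℝ) (hβ0 : 0 < β) (hβ1 : β < 1)
    (hT : 0 < T) (hlam1 : 0 < lam1) (hlam : lam1 ≤ lam)
    (ht : t ∈ Set.Icc (T / 2) T) (hβT : β < Real.sqrt lam1 * T) :
    β * Real.exp (-Real.sqrt lam * (T - t)) /
        (2 * β * Real.sqrt lam + 2 * Real.sqrt lam * Real.exp (-Real.sqrt lam * t)) ≤
      (1 / (2 * Real.sqrt lam1)) * β ^ ((T - t) / t) *
        (Real.sqrt lam1 * T / (1 + Real.log (Real.sqrt lam1 * T / β))) ^ ((2 * t - T) / t) := by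
  obtain ⟨ht1, ht2⟩ := ht
  have ht0 : 0 < t := by linarith
  set s1 := Real.sqrt lam1 with hs1def
  set s := Real.sqrt lam with hsdef
  have hs1 : 0 < s1 := Real.sqrt_pos.2 hlam1
  have hss : s1 ≤ s := Real.sqrt_le_sqrt hlam
  have hs0 : 0 < s := lt_of_lt_of_le hs1 hss
  set A := Real.exp (-s * t) with hAdef
  have hA0 : 0 < A := Real.exp_pos _
  set θ := (T - t) / t with hθdef
  set ν := (2 * t - T) / t with hνdef
  have hθ0 : 0 ≤ θ := div_nonneg (by linarith) ht0.le
  have hν0 : 0 ≤ ν := div_nonneg (by linarith) ht0.le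
  have hν1 : ν ≤ 1 := by rw [hνdef, div_le_one ht0]; linarith
  have hθν : θ + ν = 1 := by
    rw [hθdef, hνdef, ← add_div, div_eq_one_iff_eq ht0.ne']; ring
  set y := s1 * T with hydef
  have hy0 : 0 < y := mul_pos hs1 hT
  set D := 1 + Real.log (y / β) with hDdef
  have hyβ : 1 < y / β := (one_lt_div hβ0).2 hβT
  have hD1 : 1 < D := by
    have := Real.log_pos hyβ; rw [hDdef]; linarith
  have hD0 : 0 < D := by linarith
  set X := y / D with hXdef
  have hX0 : 0 < X := div_pos hy0 hD0
  have hβA0 : 0 < β + A := by positivity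
  -- logarithm monotonicity
  have hlogsT : Real.log y ≤ Real.log (s * T) := by
    apply Real.log_le_log hy0
    rw [hydef]
    exact mul_le_mul_of_nonneg_right hss hT.le
  -- the key exponential bound via e^x ≥ 1 + x
  have hexp : β * (1 + (Real.log (s * T) - Real.log β - s * t)) ≤ s * T * A := by
    have h1 : (Real.log (s * T) - Real.log β - s * t) + 1 ≤
        Real.exp (Real.log (s * T) - Real.log β - s * t) := Real.add_one_le_exp _
    have h2 : β * Real.exp (Real.log (s * T) - Real.log β - s * t) = s * T * A := by
      rw [hAdef]
      rw [show Real.log (s * T) - Real.log β - s * t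
            = -Real.log β + (Real.log (s * T) + (-s * t)) by ring]
      rw [Real.exp_add, Real.exp_add, Real.exp_neg, Real.exp_log hβ0,
        Real.exp_log (by positivity : (0:ℝ) < s * T)]
      field_simp
    calc β * (1 + (Real.log (s * T) - Real.log β - s * t))
        ≤ β * Real.exp (Real.log (s * T) - Real.log β - s * t) := by
          apply mul_le_mul_of_nonneg_left _ hβ0.le
          linarith [h1]
      _ = s * T * A := h2
  -- claim4 : s*y*(β+A) ≥ s1*β*D
  have claim4 : s1 * β * D ≤ s * y * (β + A) := by
    have e1 : s * y * (β + A) = s * y * β + s1 * (s * T * A) := by rw [hydef]; ring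
    have e2 : s1 * (β * (1 + (Real.log (s * T) - Real.log β - s * t))) ≤ s1 * (s * T * A) :=
      mul_le_mul_of_nonneg_left hexp hs1.le
    have hD' : D = 1 + (Real.log y - Real.log β) := by
      rw [hDdef, Real.log_div hy0.ne' hβ0.ne']
    have p1 : 0 ≤ s * β * (y - s1 * t) := by
      apply mul_nonneg (by positivity)
      have : s1 * t ≤ y := by rw [hydef]; exact mul_le_mul_of_nonneg_left ht2 hs1.le
      linarith
    have p2 : 0 ≤ s1 * β * (Real.log (s * T) - Real.log y) := by
      apply mul_nonneg (by positivity); linarith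
    have e3 : s1 * β * D = s1 * β * (1 + (Real.log y - Real.log β)) := by rw [hD']
    nlinarith [e1, e2, e3, p1, p2]
  -- key2
  have hP0 : 0 < X * (β + A) := by positivity
  have hyp : s1 * β ≤ s * (X * (β + A)) := by
    have e : s * (X * (β + A)) = s * y * (β + A) / D := by rw [hXdef]; ring
    rw [e, le_div_iff₀ hD0]
    exact claim4
  have key2 : s1 * β ^ ν ≤ s * (X * (β + A)) ^ ν :=
    pow_trick hs1 hss hβ0 hP0 hν0 hν1 hyp
  -- key1
  have hAθ : A ^ θ ≤ (β + A) ^ θ := Real.rpow_le_rpow hA0.le (by linarith) hθ0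
  have key1 : s1 * (β ^ ν * A ^ θ) ≤ s * (X ^ ν * (β + A)) := by
    calc s1 * (β ^ ν * A ^ θ) ≤ s1 * (β ^ ν * (β + A) ^ θ) := by
          apply mul_le_mul_of_nonneg_left _ hs1.le
          exact mul_le_mul_of_nonneg_left hAθ (Real.rpow_nonneg hβ0.le ν)
      _ = (s1 * β ^ ν) * (β + A) ^ θ := by ring
      _ ≤ (s * (X * (β + A)) ^ ν) * (β + A) ^ θ :=
          mul_le_mul_of_nonneg_right key2 (Real.rpow_nonneg hβA0.le θ)
      _ = s * (X ^ ν * ((β + A) ^ ν * (β + A) ^ θ)) := by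
          rw [Real.mul_rpow hX0.le hβA0.le]; ring
      _ = s * (X ^ ν * (β + A)) := by
          rw [← Real.rpow_add hβA0, show ν + θ = 1 by linarith, Real.rpow_one]
  -- assemble
  have hE : Real.exp (-s * (T - t)) = A ^ θ := by
    rw [hAdef, ← Real.exp_mul, hθdef]
    congr 1
    field_simp
  have hβsplit : β = β ^ θ * β ^ ν := by
    rw [← Real.rpow_add hβ0, hθν, Real.rpow_one]
  have eβ : β * Real.exp (-s * (T - t)) = β ^ θ * (β ^ ν * A ^ θ) := by
    rw [hE]
    nth_rw 1 [hβsplit]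
    ring
  have hden : 0 < 2 * β * s + 2 * s * A := by positivity
  rw [div_le_iff₀ hden, eβ]
  have eR : (1 / (2 * s1) * β ^ θ * X ^ ν) * (2 * β * s + 2 * s * A)
      = (β ^ θ * (s * (X ^ ν * (β + A)))) / s1 := by
    field_simp
  rw [eR, le_div_iff₀ hs1]
  calc β ^ θ * (β ^ ν * A ^ θ) * s1 = β ^ θ * (s1 * (β ^ ν * A ^ θ)) := by ring
    _ ≤ β ^ θ * (s * (X ^ ν * (β + A))) :=
        mul_le_mul_of_nonneg_left key1 (Real.rpow_nonneg hβ0.le θ)
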